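/- Let $S$ be a sublinear operator on $\ell^2(\mathbb{Z}^d)$ of the form $Sf = (\sum_k |S_k f|^2)^{1/2}$, where each $S_k f$ is constant on atoms $Q$ of a partition $\sigma_k$ of $\mathbb{Z}^d$ into congruent rectangles, taking value $c_{k,Q}(f) \geq 0$ on $Q$. Suppose that the value $c_{k,Q}(f)$ depends only on the restriction of $f$ to the set $\{M_{HL} w \gtrsim_d 2^j\}$ whenever $2^j < w(3Q)/|3Q| \leq 2^{j+1}$ (in the sense that $c_{k,Q}(f) = c_{k,Q}(f \cdot \mathbf{1}_{\{M_{HL} w \gtrsim_d 2^j\}})$, as follows from $c_{k,Q}$ depending only on $f|_{5Q}$ and $5Q \subset \{M_{HL}w \gtrsim_d 2^j\}$), and that $\|Sf\|_{\ell^2} \leq C_0\|f\|_{\ell^2}$. Then for every nonnegative weight $w$, $\sum_{x} |Sf(x)|^2 w(x) \leq C \sum_x |f(x)|^2 M_{HL}w(x)$, with $C$ depending only on $C_0$ and $d$. -/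

import Mathlib

open scoped ENNReal NNReal

noncomputable def atomQ (d : ℕ) (s : Fin d → ℕ) (m : Fin d → ℤ) : Finset (Fin d → ℤ) :=
  Finset.Icc (fun a => 2 ^ (s a) * m a) (fun a => 2 ^ (s a) * (m a + 1) - 1)

noncomputable def atomQ3 (d : ℕ) (s : Fin d → ℕ) (m : Fin d → ℤ) : Finset (Fin d → ℤ) :=
  Finset.Icc (fun a => 2 ^ (s a) * (m a - 1)) (fun a => 2 ^ (s a) * (m a + 2) - 1)

/-- The index of the atom of the partition with side exponents `s` containing `x`. -/
def atomIdx (d : ℕ) (s : Fin d → ℕ) (x : Fin d → ℤ) : Fin d → ℤ :=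
  fun a => Int.fdiv (x a) (2 ^ (s a))

/-- The discrete cube `∏_a [y_a, y_a + n]`. -/
noncomputable def cubeU (d : ℕ) (y : Fin d → ℤ) (n : ℕ) : Finset (Fin d → ℤ) :=
  Finset.Icc y (fun a => y a + n)

/-- The uncentered cubic Hardy–Littlewood maximal function on `ℤ^d`. -/
noncomputable def MHL (d : ℕ) (w : (Fin d → ℤ) → ℝ≥0∞) (x : Fin d → ℤ) : ℝ≥0∞ :=
  ⨆ (y : Fin d → ℤ) (n : ℕ) (_ : x ∈ cubeU d y n),
    ((cubeU d y n).card : ℝ≥0∞)⁻¹ * ∑ z ∈ cubeU d y n, w z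

section aux

lemma mem_atomQ_iff {d : ℕ} (s : Fin d → ℕ) (x m : Fin d → ℤ) :
    x ∈ atomQ d s m ↔ atomIdx d s x = m := by
  simp only [atomQ, Finset.mem_Icc, atomIdx, funext_iff, Pi.le_def]
  rw [← forall_and]
  refine forall_congr' fun a => ?_
  have hb : (0:ℤ) < 2 ^ (s a) := by positivity
  rw [Int.fdiv_eq_ediv_of_nonneg _ hb.le]
  constructor
  · rintro ⟨h1, h2⟩
    have hle : m a ≤ x a / 2 ^ s a := (Int.le_ediv_iff_mul_le hb).2 (by linarith)
    have hlt : x a / 2 ^ s a < m a + 1 := (Int.ediv_lt_iff_lt_mul hb).2 (by linarith)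
    omega
  · intro h
    have h1 : (x a / 2 ^ s a) * 2 ^ s a ≤ x a := (Int.le_ediv_iff_mul_le hb).1 le_rfl
    have h2 : x a < (x a / 2 ^ s a + 1) * 2 ^ s a := Int.lt_ediv_add_one_mul_self _ hb
    rw [← h]
    constructor <;> nlinarith

lemma self_mem_atomQ {d : ℕ} (s : Fin d → ℕ) (x : Fin d → ℤ) :
    x ∈ atomQ d s (atomIdx d s x) := (mem_atomQ_iff s x _).2 rfl

lemma atomQ_subset {d : ℕ} (s : Fin d → ℕ) (m : Fin d → ℤ) :
    atomQ d s m ⊆ atomQ3 d s m := by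
  apply Finset.Icc_subset_Icc <;> intro a <;> simp only [] <;> nlinarith [pow_pos (show (0:ℤ) < 2 by norm_num) (s a)]

lemma card_atomQ {d : ℕ} (s : Fin d → ℕ) (m : Fin d → ℤ) :
    (atomQ d s m).card = ∏ a, 2 ^ (s a) := by
  rw [atomQ, Pi.card_Icc]
  refine Finset.prod_congr rfl fun a _ => ?_
  rw [Int.card_Icc]
  have he : ((2:ℤ) ^ s a * (m a + 1) - 1 + 1 - (2:ℤ) ^ s a * m a : ℤ)
      = ((2 ^ s a : ℕ) : ℤ) := by push_cast; ring
  rw [he, Int.toNat_natCast]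

lemma card_atomQ3 {d : ℕ} (s : Fin d → ℕ) (m : Fin d → ℤ) :
    (atomQ3 d s m).card = 3 ^ d * (atomQ d s m).card := by
  rw [atomQ3, Pi.card_Icc, card_atomQ]
  have : ∀ a : Fin d, (Finset.Icc ((2:ℤ) ^ s a * (m a - 1)) (2 ^ s a * (m a + 2) - 1)).card
      = 3 * 2 ^ (s a) := by
    intro a
    rw [Int.card_Icc]
    have he : ((2:ℤ) ^ s a * (m a + 2) - 1 + 1 - (2:ℤ) ^ s a * (m a - 1) : ℤ)
        = ((3 * 2 ^ s a : ℕ) : ℤ) := by push_cast; ring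
    rw [he, Int.toNat_natCast]
  rw [Finset.prod_congr rfl fun a _ => this a, Finset.prod_mul_distrib]
  simp [Finset.prod_const]

lemma card_atomQ_ne_zero {d : ℕ} (s : Fin d → ℕ) (m : Fin d → ℤ) :
    (atomQ d s m).card ≠ 0 := by
  rw [card_atomQ]; positivity

lemma regroup {d : ℕ} (s : Fin d → ℕ) (F u : (Fin d → ℤ) → ℝ≥0∞) :
    ∑' x : Fin d → ℤ, F (atomIdx d s x) * u x
      = ∑' m : Fin d → ℤ, F m * ∑ x ∈ atomQ d s m, u x := by
  rw [← ENNReal.tsum_fiberwise (fun x => F (atomIdx d s x) * u x) (atomIdx d s)]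
  refine tsum_congr fun m => ?_
  have hset : (atomIdx d s ⁻¹' {m} : Set (Fin d → ℤ)) = ↑(atomQ d s m) := by
    ext x
    simp [mem_atomQ_iff]
  calc ∑' (b : ↥(atomIdx d s ⁻¹' {m})), F (atomIdx d s b.1) * u b.1
      = ∑' (b : ↥(atomIdx d s ⁻¹' {m})), F m * u b.1 := by
        refine tsum_congr fun b => ?_
        have : atomIdx d s b.1 = m := b.2
        rw [this]
    _ = F m * ∑' (b : ↥(atomIdx d s ⁻¹' {m})), u b.1 := ENNReal.tsum_mul_left
    _ = F m * ∑ x ∈ atomQ d s m, u x := by rw [hset, Finset.tsum_subtype']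

lemma tsum_dyadic_le {A : ℝ≥0∞} (hA : A ≠ ⊤) :
    ∑' j : ℤ, (if (2:ℝ≥0∞) ^ j ≤ A then (2:ℝ≥0∞) ^ j else 0) ≤ 2 * A := by
  have h2 : (2:ℝ≥0∞) ≠ 0 := by norm_num
  have h2t : (2:ℝ≥0∞) ≠ ⊤ := by norm_num
  rcases eq_or_ne A 0 with rfl | hA0
  · have hne : ∀ j : ℤ, ¬ ((2:ℝ≥0∞) ^ j ≤ 0) := fun j => by
      simpa using (ENNReal.zpow_pos h2 h2t j).ne'
    simp [hne]
  · obtain ⟨n, hn⟩ := ENNReal.exists_nat_gt hA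
    have hbd : ∀ j : ℤ, (2:ℝ≥0∞) ^ j ≤ A → j ≤ n := by
      intro j hj
      by_contra h
      push_neg at h
      have h1 : (2:ℝ≥0∞) ^ ((n:ℤ)) ≤ 2 ^ j := ENNReal.zpow_le_of_le (by norm_num) h.le
      have h2n : (n:ℝ≥0∞) ≤ 2 ^ ((n:ℤ)) := by
        rw [zpow_natCast]
        exact_mod_cast Nat.cast_le.2 (Nat.lt_two_pow_self (n := n)).le
      exact absurd (h2n.trans (h1.trans hj)) (not_le.2 hn)
    obtain ⟨j₁, hj₁⟩ := ENNReal.exists_mem_Ioc_zpow hA0 hA (by norm_num) h2t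
    obtain ⟨j₀, hP, hmax⟩ := Int.exists_greatest_of_bdd ⟨n, fun z hz => hbd z hz⟩ ⟨j₁, hj₁.1.le⟩
    calc ∑' j : ℤ, (if (2:ℝ≥0∞) ^ j ≤ A then (2:ℝ≥0∞) ^ j else 0)
        ≤ ∑' j : ℤ, (if j ≤ j₀ then (2:ℝ≥0∞) ^ j else 0) := by
          refine ENNReal.tsum_le_tsum fun j => ?_
          by_cases h1 : (2:ℝ≥0∞) ^ j ≤ A
          · rw [if_pos h1, if_pos (hmax j h1)]
          · simp [h1]
      _ = ∑' i : ℕ, (if (j₀ - (i:ℤ)) ≤ j₀ then (2:ℝ≥0∞) ^ (j₀ - (i:ℤ)) else 0) := by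
          refine (Function.Injective.tsum_eq (g := fun i : ℕ => j₀ - (i:ℤ)) ?_ ?_).symm
          · intro a b hab
            simpa using hab
          · intro j hj
            simp only [Function.mem_support, ne_eq, ite_eq_right_iff, not_forall] at hj
            obtain ⟨hjle, -⟩ := hj
            exact ⟨(j₀ - j).toNat, by show j₀ - ((j₀ - j).toNat : ℤ) = j; omega⟩
      _ = ∑' i : ℕ, (2:ℝ≥0∞) ^ j₀ * (2⁻¹ : ℝ≥0∞) ^ i := by
          refine tsum_congr fun i => ?_
          rw [if_pos (by omega), ENNReal.zpow_sub h2 h2t, zpow_natCast, ← ENNReal.inv_pow]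
      _ = (2:ℝ≥0∞) ^ j₀ * 2 := by
          rw [ENNReal.tsum_mul_left, ENNReal.tsum_geometric]
          rw [ENNReal.one_sub_inv_two, inv_inv]
      _ ≤ A * 2 := by gcongr
      _ = 2 * A := mul_comm _ _

lemma level_sum_le {δ : ℝ≥0∞} (hδ0 : δ ≠ 0) (hδt : δ ≠ ⊤) (M : ℝ≥0∞) :
    ∑' j : ℤ, (if δ * (2:ℝ≥0∞) ^ j ≤ M then (2:ℝ≥0∞) ^ (j + 1) else 0) ≤ 4 * δ⁻¹ * M := by
  rcases eq_or_ne M ⊤ with rfl | hM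
  · have : (4:ℝ≥0∞) * δ⁻¹ * ⊤ = ⊤ := by
      rw [ENNReal.mul_top]
      simp [mul_eq_zero, ENNReal.inv_eq_zero, hδt]
    rw [this]; exact le_top
  · have h2 : (2:ℝ≥0∞) ≠ 0 := by norm_num
    have h2t : (2:ℝ≥0∞) ≠ ⊤ := by norm_num
    have hAt : M / δ ≠ ⊤ := (ENNReal.div_lt_top hM hδ0).ne
    calc ∑' j : ℤ, (if δ * (2:ℝ≥0∞) ^ j ≤ M then (2:ℝ≥0∞) ^ (j + 1) else 0)
        = ∑' j : ℤ, 2 * (if (2:ℝ≥0∞) ^ j ≤ M / δ then (2:ℝ≥0∞) ^ j else 0) := by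
          refine tsum_congr fun j => ?_
          have hcond : (δ * (2:ℝ≥0∞) ^ j ≤ M) ↔ ((2:ℝ≥0∞) ^ j ≤ M / δ) := by
            rw [ENNReal.le_div_iff_mul_le (Or.inl hδ0) (Or.inl hδt), mul_comm]
          rw [mul_ite, mul_zero]
          by_cases h : δ * (2:ℝ≥0∞) ^ j ≤ M
          · rw [if_pos h, if_pos (hcond.1 h), ENNReal.zpow_add h2 h2t, zpow_one, mul_comm]
          · rw [if_neg h, if_neg (fun hc => h (hcond.2 hc))]
      _ = 2 * ∑' j : ℤ, (if (2:ℝ≥0∞) ^ j ≤ M / δ then (2:ℝ≥0∞) ^ j else 0) :=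
          ENNReal.tsum_mul_left
      _ ≤ 2 * (2 * (M / δ)) := by gcongr; exact tsum_dyadic_le hAt
      _ = 4 * δ⁻¹ * M := by
          rw [div_eq_mul_inv]
          ring

end aux

/-- Weighted `ℓ²` estimate `∫ |Sf|² w ≲ ∫ |f|² M_{HL} w` for a square function
`Sf = (∑_k |S_k f|²)^{1/2}` whose atomic values localize to the sets
`{M_{HL} w ≳ 2^j}` at weight-density level `2^j`, given the unweighted `ℓ²` bound. -/
theorem stmt_12 (d : ℕ) (C₀ : ℝ≥0∞) (hC₀ : C₀ ≠ ⊤) (δ : ℝ≥0∞) (hδ : 0 < δ) (hδ' : δ ≠ ⊤) :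
    ∃ C : ℝ≥0∞, C ≠ ⊤ ∧
      ∀ (s : ℕ → Fin d → ℕ)
        (c : ℕ → (Fin d → ℤ) → ((Fin d → ℤ) → ℝ≥0) → ℝ≥0∞)
        (w : (Fin d → ℤ) → ℝ≥0∞), (∀ x, w x ≠ ⊤) →
        (∀ (k : ℕ) (m : Fin d → ℤ) (j : ℤ) (f : (Fin d → ℤ) → ℝ≥0),
          (2:ℝ≥0∞) ^ j <
              (∑ x ∈ atomQ3 d (s k) m, w x) / ((atomQ3 d (s k) m).card : ℝ≥0∞) →
          (∑ x ∈ atomQ3 d (s k) m, w x) / ((atomQ3 d (s k) m).card : ℝ≥0∞) ≤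
              (2:ℝ≥0∞) ^ (j + 1) →
          c k m f = c k m (fun x => if δ * (2:ℝ≥0∞) ^ j ≤ MHL d w x then f x else 0)) →
        (∀ f : (Fin d → ℤ) → ℝ≥0,
          (∑' x : Fin d → ℤ, ∑' k : ℕ, (c k (atomIdx d (s k) x) f) ^ 2) ≤
            C₀ * ∑' x : Fin d → ℤ, ((f x : ℝ≥0∞)) ^ 2) →
        ∀ f : (Fin d → ℤ) → ℝ≥0,
          (∑' x : Fin d → ℤ, (∑' k : ℕ, (c k (atomIdx d (s k) x) f) ^ 2) * w x) ≤
            C * ∑' x : Fin d → ℤ, ((f x : ℝ≥0∞)) ^ 2 * MHL d w x := by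
  have h2 : (2:ℝ≥0∞) ≠ 0 := by norm_num
  have h2t : (2:ℝ≥0∞) ≠ ⊤ := by norm_num
  refine ⟨(3:ℝ≥0∞) ^ d * C₀ * (4 * δ⁻¹), ?_, ?_⟩
  · exact ENNReal.mul_ne_top (ENNReal.mul_ne_top (ENNReal.pow_ne_top (by norm_num)) hC₀)
      (ENNReal.mul_ne_top (by norm_num) (ENNReal.inv_ne_top.2 hδ.ne'))
  intro s c w hw hloc hC f
  classical
  set M : (Fin d → ℤ) → ℝ≥0∞ := MHL d w with hMdef
  set g : ℤ → (Fin d → ℤ) → ℝ≥0 :=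
    fun j x => if δ * (2:ℝ≥0∞) ^ j ≤ M x then f x else 0 with hgdef
  set avg : ℕ → (Fin d → ℤ) → ℝ≥0∞ :=
    fun k m => (∑ x ∈ atomQ3 d (s k) m, w x) / ((atomQ3 d (s k) m).card : ℝ≥0∞) with havgdef
  have hcard3 : ∀ (k : ℕ) (m : Fin d → ℤ), ((atomQ3 d (s k) m).card : ℝ≥0∞) ≠ 0 := by
    intro k m
    have : (atomQ3 d (s k) m).card ≠ 0 := by
      rw [card_atomQ3]
      exact Nat.mul_ne_zero (by positivity) (card_atomQ_ne_zero _ _)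
    exact_mod_cast Nat.cast_ne_zero.2 this
  have hcard3t : ∀ (k : ℕ) (m : Fin d → ℤ), ((atomQ3 d (s k) m).card : ℝ≥0∞) ≠ ⊤ :=
    fun k m => ENNReal.natCast_ne_top _
  have hsumt : ∀ (k : ℕ) (m : Fin d → ℤ), (∑ x ∈ atomQ3 d (s k) m, w x) ≠ ⊤ := by
    intro k m
    exact (ENNReal.sum_lt_top.2 fun x _ => (hw x).lt_top).ne
  have havgt : ∀ (k : ℕ) (m : Fin d → ℤ), avg k m ≠ ⊤ :=
    fun k m => (ENNReal.div_lt_top (hsumt k m) (hcard3 k m)).ne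
  set jsel : ℕ → (Fin d → ℤ) → ℤ := fun k m =>
    if h : avg k m = 0 then 0
    else (ENNReal.exists_mem_Ioc_zpow h (havgt k m) (by norm_num : (1:ℝ≥0∞) < 2) h2t).choose with hjseldef
  have hjsel : ∀ (k : ℕ) (m : Fin d → ℤ), avg k m ≠ 0 →
      (2:ℝ≥0∞) ^ (jsel k m) < avg k m ∧ avg k m ≤ (2:ℝ≥0∞) ^ (jsel k m + 1) := by
    intro k m h
    have hs := (ENNReal.exists_mem_Ioc_zpow h (havgt k m) (by norm_num : (1:ℝ≥0∞) < 2) h2t).choose_spec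
    rw [hjseldef]
    simp only [dif_neg h]
    exact ⟨hs.1, hs.2⟩
  -- pointwise decomposition over levels
  have step1 : ∀ (k : ℕ) (x : Fin d → ℤ),
      (c k (atomIdx d (s k) x) f) ^ 2 * w x
        ≤ ∑' j : ℤ, (if j = jsel k (atomIdx d (s k) x) then
            (c k (atomIdx d (s k) x) (g j)) ^ 2 * w x else 0) := by
    intro k x
    set m := atomIdx d (s k) x with hm
    rw [tsum_eq_single (jsel k m) (fun j hj => if_neg hj), if_pos rfl]
    by_cases hwx : w x = 0
    · rw [hwx, mul_zero, mul_zero]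
    · have hx3 : x ∈ atomQ3 d (s k) m := atomQ_subset _ _ (self_mem_atomQ _ x)
      have hsum0 : (∑ y ∈ atomQ3 d (s k) m, w y) ≠ 0 := by
        intro h0
        exact hwx ((Finset.sum_eq_zero_iff.1 h0) x hx3)
      have havg0 : avg k m ≠ 0 := by
        rw [havgdef]
        intro h0
        simp only [ENNReal.div_eq_zero_iff] at h0
        rcases h0 with h0 | h0
        · exact hsum0 h0
        · exact hcard3t k m h0
      obtain ⟨hlt, hle⟩ := hjsel k m havg0
      have := hloc k m (jsel k m) f hlt hle
      rw [this]
  calc ∑' x : Fin d → ℤ, (∑' k : ℕ, (c k (atomIdx d (s k) x) f) ^ 2) * w x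
      = ∑' x : Fin d → ℤ, ∑' k : ℕ, (c k (atomIdx d (s k) x) f) ^ 2 * w x :=
        tsum_congr fun x => ENNReal.tsum_mul_right.symm
    _ = ∑' k : ℕ, ∑' x : Fin d → ℤ, (c k (atomIdx d (s k) x) f) ^ 2 * w x :=
        ENNReal.tsum_comm
    _ ≤ ∑' k : ℕ, ∑' x : Fin d → ℤ, ∑' j : ℤ,
          (if j = jsel k (atomIdx d (s k) x) then
            (c k (atomIdx d (s k) x) (g j)) ^ 2 * w x else 0) :=
        ENNReal.tsum_le_tsum fun k => ENNReal.tsum_le_tsum fun x => step1 k x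
    _ = ∑' j : ℤ, ∑' k : ℕ, ∑' x : Fin d → ℤ,
          (if j = jsel k (atomIdx d (s k) x) then
            (c k (atomIdx d (s k) x) (g j)) ^ 2 * w x else 0) := by
        calc ∑' k : ℕ, ∑' x : Fin d → ℤ, ∑' j : ℤ,
              (if j = jsel k (atomIdx d (s k) x) then
                (c k (atomIdx d (s k) x) (g j)) ^ 2 * w x else 0)
            = ∑' k : ℕ, ∑' j : ℤ, ∑' x : Fin d → ℤ,
              (if j = jsel k (atomIdx d (s k) x) then
                (c k (atomIdx d (s k) x) (g j)) ^ 2 * w x else 0) :=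
              tsum_congr fun k => ENNReal.tsum_comm
          _ = ∑' j : ℤ, ∑' k : ℕ, ∑' x : Fin d → ℤ,
              (if j = jsel k (atomIdx d (s k) x) then
                (c k (atomIdx d (s k) x) (g j)) ^ 2 * w x else 0) :=
              ENNReal.tsum_comm
    _ ≤ ∑' j : ℤ, ∑' k : ℕ, ((2:ℝ≥0∞) ^ (j + 1) * 3 ^ d) *
          ∑' x : Fin d → ℤ, (c k (atomIdx d (s k) x) (g j)) ^ 2 := by
        refine ENNReal.tsum_le_tsum fun j => ENNReal.tsum_le_tsum fun k => ?_
        calc ∑' x : Fin d → ℤ,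
              (if j = jsel k (atomIdx d (s k) x) then
                (c k (atomIdx d (s k) x) (g j)) ^ 2 * w x else 0)
            = ∑' x : Fin d → ℤ,
              (if j = jsel k (atomIdx d (s k) x) then
                (c k (atomIdx d (s k) x) (g j)) ^ 2 else 0) * w x := by
              refine tsum_congr fun x => ?_
              rw [ite_mul, zero_mul]
          _ = ∑' m : Fin d → ℤ,
              (if j = jsel k m then (c k m (g j)) ^ 2 else 0) * ∑ x ∈ atomQ d (s k) m, w x :=
              regroup (s k) (fun m => if j = jsel k m then (c k m (g j)) ^ 2 else 0) w
          _ ≤ ∑' m : Fin d → ℤ, ((2:ℝ≥0∞) ^ (j + 1) * 3 ^ d) *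
                ((c k m (g j)) ^ 2 * ((atomQ d (s k) m).card : ℝ≥0∞)) := by
              refine ENNReal.tsum_le_tsum fun m => ?_
              by_cases hjm : j = jsel k m
              · rw [if_pos hjm]
                have hQ3 : ∑ x ∈ atomQ d (s k) m, w x ≤ ∑ x ∈ atomQ3 d (s k) m, w x :=
                  Finset.sum_le_sum_of_subset (atomQ_subset _ _)
                have hcard : ((atomQ3 d (s k) m).card : ℝ≥0∞)
                    = 3 ^ d * ((atomQ d (s k) m).card : ℝ≥0∞) := by
                  rw [card_atomQ3]; push_cast; ring
                by_cases havg0 : avg k m = 0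
                · have hsum0 : (∑ x ∈ atomQ3 d (s k) m, w x) = 0 := by
                    have := havg0
                    rw [havgdef] at this
                    simp only [ENNReal.div_eq_zero_iff] at this
                    rcases this with h | h
                    · exact h
                    · exact absurd h (hcard3t k m)
                  have : (∑ x ∈ atomQ d (s k) m, w x) = 0 :=
                    le_antisymm (hsum0 ▸ hQ3) zero_le
                  rw [this, mul_zero]
                  exact zero_le
                · obtain ⟨-, hle⟩ := hjsel k m havg0
                  rw [hjm] at *
                  have hsum3 : (∑ x ∈ atomQ3 d (s k) m, w x)
                      = avg k m * ((atomQ3 d (s k) m).card : ℝ≥0∞) := by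
                    rw [havgdef]
                    exact (ENNReal.div_mul_cancel (hcard3 k m) (hcard3t k m)).symm
                  calc (c k m (g (jsel k m))) ^ 2 * ∑ x ∈ atomQ d (s k) m, w x
                      ≤ (c k m (g (jsel k m))) ^ 2 *
                        (avg k m * ((atomQ3 d (s k) m).card : ℝ≥0∞)) := by
                        rw [← hsum3]; exact mul_le_mul_right hQ3 _
                    _ ≤ (c k m (g (jsel k m))) ^ 2 *
                        ((2:ℝ≥0∞) ^ (jsel k m + 1) *
                          (3 ^ d * ((atomQ d (s k) m).card : ℝ≥0∞))) := by
                        rw [← hcard]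
                        exact mul_le_mul_right (mul_le_mul_left hle _) _
                    _ = ((2:ℝ≥0∞) ^ (jsel k m + 1) * 3 ^ d) *
                        ((c k m (g (jsel k m))) ^ 2 * ((atomQ d (s k) m).card : ℝ≥0∞)) := by
                        ring
              · rw [if_neg hjm, zero_mul]
                exact zero_le
          _ = ((2:ℝ≥0∞) ^ (j + 1) * 3 ^ d) *
                ∑' m : Fin d → ℤ, (c k m (g j)) ^ 2 * ((atomQ d (s k) m).card : ℝ≥0∞) :=
              ENNReal.tsum_mul_left
          _ = ((2:ℝ≥0∞) ^ (j + 1) * 3 ^ d) *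
                ∑' x : Fin d → ℤ, (c k (atomIdx d (s k) x) (g j)) ^ 2 := by
              congr 1
              have := regroup (s k) (fun m => (c k m (g j)) ^ 2) (fun _ => 1)
              simp only [mul_one, Finset.sum_const, nsmul_eq_mul] at this
              exact this.symm
    _ = ∑' j : ℤ, ((2:ℝ≥0∞) ^ (j + 1) * 3 ^ d) *
          ∑' x : Fin d → ℤ, ∑' k : ℕ, (c k (atomIdx d (s k) x) (g j)) ^ 2 := by
        refine tsum_congr fun j => ?_
        rw [ENNReal.tsum_mul_left, ENNReal.tsum_comm]
    _ ≤ ∑' j : ℤ, ((2:ℝ≥0∞) ^ (j + 1) * 3 ^ d) *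
          (C₀ * ∑' x : Fin d → ℤ, ((g j x : ℝ≥0∞)) ^ 2) := by
        refine ENNReal.tsum_le_tsum fun j => mul_le_mul_right (hC (g j)) _
    _ = 3 ^ d * C₀ * ∑' x : Fin d → ℤ, ∑' j : ℤ,
          ((f x : ℝ≥0∞)) ^ 2 * (if δ * (2:ℝ≥0∞) ^ j ≤ M x then (2:ℝ≥0∞) ^ (j + 1) else 0) := by
        have hx : ∀ j : ℤ, ∑' x : Fin d → ℤ,
            ((f x : ℝ≥0∞)) ^ 2 * (if δ * (2:ℝ≥0∞) ^ j ≤ M x then (2:ℝ≥0∞) ^ (j + 1) else 0)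
            = (2:ℝ≥0∞) ^ (j + 1) * ∑' x : Fin d → ℤ, ((g j x : ℝ≥0∞)) ^ 2 := by
          intro j
          rw [← ENNReal.tsum_mul_left]
          refine tsum_congr fun x => ?_
          simp only [hgdef]
          by_cases hcond : δ * (2:ℝ≥0∞) ^ j ≤ M x
          · simp only [if_pos hcond]
            rw [mul_comm]
          · simp only [if_neg hcond]
            simp
        calc ∑' j : ℤ, ((2:ℝ≥0∞) ^ (j + 1) * 3 ^ d) *
              (C₀ * ∑' x : Fin d → ℤ, ((g j x : ℝ≥0∞)) ^ 2)
            = ∑' j : ℤ, 3 ^ d * C₀ * ∑' x : Fin d → ℤ,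
              ((f x : ℝ≥0∞)) ^ 2 * (if δ * (2:ℝ≥0∞) ^ j ≤ M x then (2:ℝ≥0∞) ^ (j + 1) else 0) := by
              refine tsum_congr fun j => ?_
              rw [hx j]
              ring
          _ = 3 ^ d * C₀ * ∑' j : ℤ, ∑' x : Fin d → ℤ,
              ((f x : ℝ≥0∞)) ^ 2 * (if δ * (2:ℝ≥0∞) ^ j ≤ M x then (2:ℝ≥0∞) ^ (j + 1) else 0) :=
              ENNReal.tsum_mul_left
          _ = 3 ^ d * C₀ * ∑' x : Fin d → ℤ, ∑' j : ℤ,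
              ((f x : ℝ≥0∞)) ^ 2 * (if δ * (2:ℝ≥0∞) ^ j ≤ M x then (2:ℝ≥0∞) ^ (j + 1) else 0) := by
              congr 1
              exact ENNReal.tsum_comm
    _ ≤ 3 ^ d * C₀ * ∑' x : Fin d → ℤ, ((f x : ℝ≥0∞)) ^ 2 * (4 * δ⁻¹ * M x) := by
        refine mul_le_mul_right (ENNReal.tsum_le_tsum fun x => ?_) _
        rw [ENNReal.tsum_mul_left]
        exact mul_le_mul_right (level_sum_le hδ.ne' hδ' (M x)) _
    _ = (3:ℝ≥0∞) ^ d * C₀ * (4 * δ⁻¹) * ∑' x : Fin d → ℤ, ((f x : ℝ≥0∞)) ^ 2 * M x := by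
        rw [mul_assoc ((3:ℝ≥0∞) ^ d * C₀)]
        congr 1
        rw [← ENNReal.tsum_mul_left]
        refine tsum_congr fun x => ?_
        ring
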